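/- Let X be a compact metric space and T : X → X a homeomorphism. Then the quotient group K₀(X,T) = C(X,ℤ)/β C(X,ℤ) is torsion-free, where C(X,ℤ) is the group of continuous integer-valued functions on X and β f = f ∘ T − f. -/

import Mathlib

/-- For a compact metric space `X` and a homeomorphism `T : X → X`,
the quotient group `K₀(X,T) = C(X,ℤ) ⧸ β C(X,ℤ)` is torsion-free, where
`β f = f ∘ T - f`. -/
theorem K0_torsionFree {X : Type*} [MetricSpace X] [CompactSpace X]
    (T : X ≃ₜ X) (B : AddSubgroup C(X, ℤ))
    (hB : ∀ f : C(X, ℤ), f ∈ B ↔ ∃ g : C(X, ℤ), f = g.comp (T : C(X, X)) - g) :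
    ∀ (a : C(X, ℤ) ⧸ B) (k : ℕ), k ≠ 0 → k • a = 0 → a = 0 := by
  intro a k hk hka
  obtain ⟨f, rfl⟩ := QuotientAddGroup.mk_surjective a
  have hmem : (k • f : C(X, ℤ)) ∈ B := by
    rwa [← QuotientAddGroup.eq_zero_iff, QuotientAddGroup.mk_nsmul]
  obtain ⟨g, hg⟩ := (hB _).mp hmem
  rw [QuotientAddGroup.eq_zero_iff, hB]
  refine ⟨⟨fun x => g x / (k : ℤ), (continuous_of_discreteTopology : Continuous (· / (k : ℤ))).comp g.continuous⟩, ?_⟩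
  ext x
  have hk' : (k : ℤ) ≠ 0 := by exact_mod_cast hk
  simp only [ContinuousMap.sub_apply, ContinuousMap.comp_apply, ContinuousMap.coe_mk]
  have hgx : (k : ℤ) * f x = g ((T : C(X, X)) x) - g x := by
    have := congrArg (fun φ : C(X, ℤ) => φ x) hg
    simpa using this
  have hT : g ((T : C(X, X)) x) = g x + f x * (k : ℤ) := by linarith
  rw [show g (T x) = g x + f x * (k : ℤ) from hT, Int.add_mul_ediv_right _ _ hk']
  ring
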